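/- There exist constants N > 0 and κ > 0, depending only on η and ε₀ and independent of ε, such that for all sufficiently small ε > 0 (ε ≪ N^{−1} e^{−N}), all α, β ∈ 𝔸, all θ ∈ Θ and all λ = e^s > 1, the set Z^{A,ε,λ}_{α,β,θ} is κ-dominated by Δ_{Q'} ∪ Δ_{Λ'_{1,s}} ∪ Δ_{Λ'_{2,s}}; in particular Z^{A,ε,λ}_{α,β,θ} is empty whenever (α, β) does not satisfy condition (AA). -/

import Mathlib

open MeasureTheory Filter Set
open scoped ENNReal Topology

noncomputable section

/-- `η = a + ib`. -/
def etaC (a b : ℝ) : ℂ := (a : ℂ) + (b : ℂ) * Complex.I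

/-- The open sector `S = {u+iv : v > 0, bu + av > 0}`. -/
def sectorS (a b : ℝ) : Set ℂ := {z : ℂ | 0 < z.im ∧ 0 < b * z.re + a * z.im}

/-- The ring `𝔸 = {α : e^{-2πb} < |α| ≤ 1}`. -/
def ringA (b : ℝ) : Set ℂ :=
  {α : ℂ | Real.exp (-(2 * Real.pi * b)) < ‖α‖ ∧ ‖α‖ ≤ 1}

/-- The parametrization `x(α, ζ) = (α e^{iη(ζ + b⁻¹ log|α|)}, e^{i(ζ + b⁻¹ log|α|)})` of the
leaf `L_α` near a hyperbolic singularity. -/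
def xmap (a b : ℝ) (α ζ : ℂ) : ℂ × ℂ :=
  (α * Complex.exp (Complex.I * etaC a b * (ζ + ((Real.log (‖α‖) / b : ℝ) : ℂ))),
   Complex.exp (Complex.I * (ζ + ((Real.log (‖α‖) / b : ℝ) : ℂ))))

/-- The parameter region `Θ = {θ : |θ₁ - 1| < ε₀, |θ₂ - 1| < ε₀}`. -/
def thetaSet (e0 : ℝ) : Set (ℂ × ℂ) :=
  {θ : ℂ × ℂ | ‖θ.1 - 1‖ < e0 ∧ ‖θ.2 - 1‖ < e0}

/-- The solution set `Z^λ_{α,β,θ} = {(ζ, ζ̌) ∈ S × S : x(α,ζ) - x(β,ζ̌) = θ/λ}`. -/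
def solSet (a b : ℝ) (α β : ℂ) (θ : ℂ × ℂ) (lam : ℝ) : Set (ℂ × ℂ) :=
  {p : ℂ × ℂ | p.1 ∈ sectorS a b ∧ p.2 ∈ sectorS a b ∧
    (xmap a b α p.1).1 - (xmap a b β p.2).1 = θ.1 / (lam : ℂ) ∧
    (xmap a b α p.1).2 - (xmap a b β p.2).2 = θ.2 / (lam : ℂ)}

/-- The ratio `ρ₁ = x₁/y₁` at a solution `p = (ζ, ζ̌)`. -/
def rho1 (a b : ℝ) (α β : ℂ) (p : ℂ × ℂ) : ℂ := (xmap a b α p.1).1 / (xmap a b β p.2).1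

/-- The ratio `ρ₂ = x₂/y₂` at a solution `p = (ζ, ζ̌)`. -/
def rho2 (a b : ℝ) (α β : ℂ) (p : ℂ × ℂ) : ℂ := (xmap a b α p.1).2 / (xmap a b β p.2).2

/-- The subset `Z^{A,ε,λ}_{α,β,θ}` of solutions with `|ρ₁ - 1| ≤ ε` and `|ρ₂ - 1| ≤ ε`. -/
def solA (a b : ℝ) (α β : ℂ) (θ : ℂ × ℂ) (lam ε : ℝ) : Set (ℂ × ℂ) :=
  {p ∈ solSet a b α β θ lam |
    ‖rho1 a b α β p - 1‖ ≤ ε ∧ ‖rho2 a b α β p - 1‖ ≤ ε}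

/-- The argument of a complex number taken in `[0, 2π)`. -/
def arg2pi (z : ℂ) : ℝ :=
  if Complex.arg z < 0 then Complex.arg z + 2 * Real.pi else Complex.arg z

/-- `δ_{α,β} = (arg α - arg β) - i(log|α| - log|β|) - 2nπ + 2mηπ`. -/
def deltaAB (a b : ℝ) (α β : ℂ) (n m : ℤ) : ℂ :=
  ((arg2pi α - arg2pi β : ℝ) : ℂ) -
    Complex.I * ((Real.log (‖α‖) - Real.log (‖β‖) : ℝ) : ℂ) -
    2 * (n : ℂ) * (Real.pi : ℂ) + 2 * (m : ℂ) * etaC a b * (Real.pi : ℂ)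

/-- Condition (AA): there are integers `n, m` with `|δ_{α,β}| ≤ Nε`. -/
def condAA (a b N ε : ℝ) (α β : ℂ) : Prop :=
  ∃ n m : ℤ, ‖deltaAB a b α β n m‖ ≤ N * ε

/-- The half-line `Q` from `0` through the points `ζ_s = (1 - η̄) b⁻¹ s`. -/
def lineQ (a b : ℝ) : Set ℂ :=
  {z : ℂ | ∃ l : ℝ, 0 ≤ l ∧ z = (l : ℂ) * (1 - starRingEnd ℂ (etaC a b))}

/-- The half-line `Λ_{1,s} = {-η̄ b⁻¹ s + l : l ≥ 0}`. -/
def lam1Line (a b s : ℝ) : Set ℂ :=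
  {z : ℂ | ∃ l : ℝ, 0 ≤ l ∧ z = -(starRingEnd ℂ (etaC a b)) * ((s / b : ℝ) : ℂ) + (l : ℂ)}

/-- The half-line `Λ_{2,s} = {b⁻¹ s - η̄ l : l ≥ 0}`. -/
def lam2Line (a b s : ℝ) : Set ℂ :=
  {z : ℂ | ∃ l : ℝ, 0 ≤ l ∧ z = ((s / b : ℝ) : ℂ) - (starRingEnd ℂ (etaC a b)) * (l : ℂ)}

/-- The diagonal `Δ_X = {(ζ,ζ) : ζ ∈ X}` over a subset `X` of `ℂ`. -/
def diagOf (X : Set ℂ) : Set (ℂ × ℂ) := {p : ℂ × ℂ | p.1 = p.2 ∧ p.1 ∈ X}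

/-- A set `Z` is `κ`-dominated by `Z'`: every point of `Z` lies at distance `≤ κ` from `Z'`. -/
def SetDomBySet {α : Type*} [PseudoMetricSpace α] (κ : ℝ) (Z Z' : Set α) : Prop :=
  ∀ x ∈ Z, ∃ y ∈ Z', dist x y ≤ κ


open Complex in
open Complex in
lemma myArcsinLe {t : ℝ} (ht : |t| ≤ 1/2) : |Real.arcsin t| ≤ 2 * |t| := by
  rcases le_total 0 t with h | h
  · rw [_root_.abs_of_nonneg h, _root_.abs_of_nonneg (Real.arcsin_nonneg.2 h)]
    rcases eq_or_lt_of_le h with rfl | hpos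
    · simp
    have h2 : (2:ℝ) * t ≤ 1 := by rw [_root_.abs_of_nonneg h] at ht; linarith
    have := Real.sin_gt_sub_cube (by linarith : (0:ℝ) < 2*t)
    have ht2 : t ≤ 1/2 := by rwa [_root_.abs_of_nonneg h] at ht
    have hle : t ≤ Real.sin (2*t) := by nlinarith [mul_pos hpos hpos]
    calc Real.arcsin t ≤ Real.arcsin (Real.sin (2*t)) := Real.monotone_arcsin hle
      _ ≤ 2*t := by
          rw [Real.arcsin_sin (by nlinarith [Real.pi_gt_three]) (by nlinarith [Real.pi_gt_three])]
  · have ht' : |(-t)| ≤ 1/2 := by rwa [abs_neg]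
    have h0 : 0 ≤ -t := by linarith
    have : |Real.arcsin (-t)| ≤ 2 * |(-t)| := by
      rw [_root_.abs_of_nonneg h0, _root_.abs_of_nonneg (Real.arcsin_nonneg.2 h0)]
      rcases eq_or_lt_of_le h0 with h' | hpos
      · simp [← h']
      have h2 : (2:ℝ) * (-t) ≤ 1 := by rw [_root_.abs_of_nonneg h0] at ht'; linarith
      have := Real.sin_gt_sub_cube (by linarith : (0:ℝ) < 2*(-t))
      have ht2 : -t ≤ 1/2 := by rwa [_root_.abs_of_nonneg h0] at ht'
      have hle : -t ≤ Real.sin (2*(-t)) := by nlinarith [mul_pos hpos hpos]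
      calc Real.arcsin (-t) ≤ Real.arcsin (Real.sin (2*(-t))) := Real.monotone_arcsin hle
        _ ≤ 2*(-t) := by
            rw [Real.arcsin_sin (by nlinarith [Real.pi_gt_three]) (by nlinarith [Real.pi_gt_three])]
    rwa [Real.arcsin_neg, abs_neg, abs_neg] at this

lemma myRealLogLe {x : ℝ} (hx : 1/2 ≤ x) : |Real.log x| ≤ 2 * |x - 1| := by
  rcases le_total 1 x with h | h
  · rw [abs_of_nonneg (Real.log_nonneg h), abs_of_nonneg (by linarith)]
    have := Real.log_le_sub_one_of_pos (by linarith : (0:ℝ) < x)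
    linarith
  · have hx0 : (0:ℝ) < x := by linarith
    rw [abs_of_nonpos (Real.log_nonpos (by linarith) h), abs_of_nonpos (by linarith)]
    have h1 : Real.log x⁻¹ ≤ x⁻¹ - 1 := Real.log_le_sub_one_of_pos (by positivity)
    rw [Real.log_inv] at h1
    have h2 : x⁻¹ - 1 = (1 - x)/x := by field_simp
    rw [h2] at h1
    have : (1-x)/x ≤ 2*(1-x) := by
      rw [div_le_iff₀ hx0]
      nlinarith
    linarith

lemma myCLogLe {z : ℂ} (h : ‖(z - 1)‖ ≤ 1/4) :
    ‖(Complex.log z)‖ ≤ 6 * ‖(z - 1)‖ := by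
  have habs1 : |‖(z)‖ - 1| ≤ ‖(z - 1)‖ := by
    have := abs_norm_sub_norm_le z (1:ℂ)
    simpa using this
  have hz : (3:ℝ)/4 ≤ ‖(z)‖ := by
    have := abs_le.1 habs1
    linarith [h]
  have hzne : z ≠ 0 := by
    intro h0; rw [h0] at hz; simp at hz; linarith
  have him : |z.im| ≤ ‖(z - 1)‖ := by
    have := Complex.abs_im_le_norm (z - 1)
    simpa using this
  have h1 : ‖(Complex.log z)‖ ≤ |(Complex.log z).re| + |(Complex.log z).im| :=
    Complex.norm_le_abs_re_add_abs_im _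
  rw [Complex.log_re, Complex.log_im] at h1
  have h2 : |Real.log (‖(z)‖)| ≤ 2 * ‖(z - 1)‖ := by
    have := myRealLogLe (by linarith : (1:ℝ)/2 ≤ ‖(z)‖)
    linarith [this, habs1, abs_le.1 habs1]
  have h3 : |Complex.arg z| ≤ 4 * ‖(z - 1)‖ := by
    have hre : 0 ≤ z.re := by
      have := Complex.abs_re_le_norm (z - 1)
      simp only [Complex.sub_re, Complex.one_re] at this
      have := abs_le.1 this
      linarith [h]
    rw [Complex.arg_of_re_nonneg hre]
    have ht : |z.im / ‖(z)‖| ≤ 1/2 := by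
      rw [abs_div, abs_of_nonneg (norm_nonneg z)]
      rw [div_le_iff₀ (by linarith : (0:ℝ) < ‖(z)‖)]
      calc |z.im| ≤ ‖(z-1)‖ := him
        _ ≤ 1/4 := h
        _ ≤ 1/2 * (3/4) := by norm_num
        _ ≤ 1/2 * ‖(z)‖ := by nlinarith
    have := myArcsinLe ht
    have ht2 : |z.im / ‖(z)‖| ≤ (4:ℝ)/3 * ‖(z-1)‖ := by
      rw [abs_div, abs_of_nonneg (norm_nonneg z)]
      rw [div_le_iff₀ (by linarith : (0:ℝ) < ‖(z)‖)]
      nlinarith [norm_nonneg (z-1)]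
    calc |Real.arcsin (z.im / ‖(z)‖)| ≤ 2 * |z.im / ‖(z)‖| := this
      _ ≤ 4 * ‖(z-1)‖ := by nlinarith [norm_nonneg (z-1)]
  linarith

lemma expIdelta (a b : ℝ) (α β : ℂ) (hα : α ≠ 0) (hβ : β ≠ 0) (n m : ℤ) :
    Complex.exp (Complex.I * deltaAB a b α β n m)
      = α / β * Complex.exp (2 * (Real.pi:ℂ) * (m:ℂ) * etaC a b * Complex.I) := by
  have e1 : ∀ γ : ℂ, γ ≠ 0 →
      Complex.exp (((arg2pi γ : ℝ) : ℂ) * Complex.I + ((Real.log (‖(γ)‖) : ℝ) : ℂ)) = γ := by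
    intro γ hγ
    have base : Complex.exp (((Complex.arg γ : ℝ) : ℂ) * Complex.I
        + ((Real.log (‖(γ)‖) : ℝ) : ℂ)) = γ := by
      rw [Complex.exp_add, ← Complex.ofReal_exp, Real.exp_log (norm_pos_iff.mpr hγ), mul_comm,
        Complex.norm_mul_exp_arg_mul_I]
    unfold arg2pi
    split
    · push_cast
      rw [add_mul, add_right_comm, Complex.exp_add]
      rw [show ((2:ℂ) * Real.pi * Complex.I) = ((1:ℤ):ℂ) * (2 * Real.pi * Complex.I) by push_cast; ring] at *
      rw [Complex.exp_int_mul_two_pi_mul_I, mul_one]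
      exact_mod_cast base
    · exact base
  have hδ : Complex.I * deltaAB a b α β n m =
      (((arg2pi α : ℝ) : ℂ) * Complex.I + ((Real.log (‖(α)‖) : ℝ) : ℂ))
      - (((arg2pi β : ℝ) : ℂ) * Complex.I + ((Real.log (‖(β)‖) : ℝ) : ℂ))
      + ((-n : ℤ) : ℂ) * (2 * (Real.pi:ℂ) * Complex.I)
      + 2 * (Real.pi:ℂ) * (m:ℂ) * etaC a b * Complex.I := by
    simp only [deltaAB]
    push_cast
    have hI : Complex.I * Complex.I = -1 := Complex.I_mul_I
    linear_combination (((Real.log (‖(β)‖) : ℝ) : ℂ) - ((Real.log (‖(α)‖) : ℝ) : ℂ)) * hI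
  rw [hδ, Complex.exp_add, Complex.exp_add, Complex.exp_sub, e1 α hα, e1 β hβ,
    Complex.exp_int_mul_two_pi_mul_I, mul_one]

lemma sol_structure (a b : ℝ) (hb : 0 < b) (α β : ℂ) (hα0 : α ≠ 0) (hβ0 : β ≠ 0)
    (θ : ℂ × ℂ) (s ε : ℝ) (hε : ε < 1)
    (p : ℂ × ℂ) (hp : p ∈ solA a b α β θ (Real.exp s) ε) :
    ‖(rho2 a b α β p - 1)‖ = ‖(θ.2)‖ * Real.exp (p.2.im - s) ∧
    ‖(rho1 a b α β p - 1)‖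
      = ‖(θ.1)‖ * Real.exp ((b * p.2.re + a * p.2.im) - s) ∧
    ∃ j k : ℤ,
      Complex.I * deltaAB a b α β j k
        = Complex.log (rho1 a b α β p) - etaC a b * Complex.log (rho2 a b α β p) ∧
      p.1 - p.2 = -Complex.I * Complex.log (rho2 a b α β p) + 2 * (Real.pi:ℂ) * (k:ℂ)
          - (((Real.log (‖(α)‖) - Real.log (‖(β)‖)) / b : ℝ) : ℂ) := by
  obtain ⟨hsol, hρ1ε, hρ2ε⟩ := hp
  obtain ⟨hS1, hS2, he1, he2⟩ := hsol
  set η := etaC a b with hηdef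
  set u : ℂ := p.1 + ((Real.log (‖(α)‖) / b : ℝ) : ℂ) with hu
  set v : ℂ := p.2 + ((Real.log (‖(β)‖) / b : ℝ) : ℂ) with hv
  have hx2 : (xmap a b α p.1).2 = Complex.exp (Complex.I * u) := rfl
  have hy2 : (xmap a b β p.2).2 = Complex.exp (Complex.I * v) := rfl
  have hx1 : (xmap a b α p.1).1 = α * Complex.exp (Complex.I * η * u) := rfl
  have hy1 : (xmap a b β p.2).1 = β * Complex.exp (Complex.I * η * v) := rfl
  rw [hx2, hy2] at he2
  rw [hx1, hy1] at he1
  have hρ2 : rho2 a b α β p = Complex.exp (Complex.I * u - Complex.I * v) := by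
    rw [rho2, hx2, hy2, ← Complex.exp_sub]
  have hρ2ne : rho2 a b α β p ≠ 0 := by
    intro h0; rw [h0] at hρ2ε; simp at hρ2ε; linarith
  have hρ1ne : rho1 a b α β p ≠ 0 := by
    intro h0; rw [h0] at hρ1ε; simp at hρ1ε; linarith
  have hc1 : ‖(rho2 a b α β p - 1)‖ = ‖(θ.2)‖ * Real.exp (p.2.im - s) := by
    have hsub : rho2 a b α β p - 1 = (θ.2 / ((Real.exp s : ℝ) : ℂ)) / Complex.exp (Complex.I * v) := by
      rw [rho2, hx2, hy2, div_sub_one (Complex.exp_ne_zero _), he2]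
    rw [hsub, norm_div, norm_div, Complex.norm_exp, Complex.norm_real, Real.norm_eq_abs]
    have hre : (Complex.I * v).re = -p.2.im := by
      simp [hv, Complex.mul_re]
    rw [hre, abs_of_pos (Real.exp_pos s), Real.exp_sub, Real.exp_neg]
    field_simp
  have hc2 : ‖(rho1 a b α β p - 1)‖
      = ‖(θ.1)‖ * Real.exp ((b * p.2.re + a * p.2.im) - s) := by
    have hsub : rho1 a b α β p - 1
        = (θ.1 / ((Real.exp s : ℝ) : ℂ)) / (β * Complex.exp (Complex.I * η * v)) := by
      rw [rho1, hx1, hy1, div_sub_one (mul_ne_zero hβ0 (Complex.exp_ne_zero _)), he1]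
    have hyabs : ‖(β * Complex.exp (Complex.I * η * v))‖
        = Real.exp (-(b * p.2.re + a * p.2.im)) := by
      rw [norm_mul, Complex.norm_exp]
      have hre : (Complex.I * η * v).re = -(b * v.re + a * v.im) := by
        simp [hηdef, etaC, Complex.mul_re, Complex.mul_im]
        ring
      rw [hre, ← Real.exp_log (norm_pos_iff.mpr hβ0), ← Real.exp_add]
      congr 1
      have : v.re = p.2.re + Real.log (‖(β)‖) / b := by simp [hv]
      have h2 : v.im = p.2.im := by simp [hv]
      rw [this, h2]
      field_simp
      ring
    rw [hsub, norm_div, norm_div, Complex.norm_real, Real.norm_eq_abs, hyabs, abs_of_pos (Real.exp_pos s),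
      Real.exp_sub, Real.exp_neg]
    field_simp
  refine ⟨hc1, hc2, ?_⟩
  have hkex : ∃ k : ℤ, Complex.I * u - Complex.I * v
      = Complex.log (rho2 a b α β p) + k * (2 * (Real.pi:ℂ) * Complex.I) := by
    rw [← Complex.exp_eq_exp_iff_exists_int, Complex.exp_log hρ2ne, ← hρ2]
  obtain ⟨k, hk⟩ := hkex
  have hρ1form : rho1 a b α β p = α / β * Complex.exp (η * (Complex.I * u - Complex.I * v)) := by
    rw [rho1, hx1, hy1, mul_div_mul_comm, ← Complex.exp_sub]
    congr 1
    ring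
  have key : Complex.exp (Complex.log (rho1 a b α β p))
      = α / β * Complex.exp (η * Complex.log (rho2 a b α β p))
        * Complex.exp (2 * (Real.pi:ℂ) * (k:ℂ) * η * Complex.I) := by
    rw [Complex.exp_log hρ1ne, hρ1form, hk, mul_add, Complex.exp_add]
    ring_nf
  have key2 : Complex.exp (Complex.I * deltaAB a b α β 0 k)
      = Complex.exp (Complex.log (rho1 a b α β p) - η * Complex.log (rho2 a b α β p)) := by
    rw [expIdelta a b α β hα0 hβ0 0 k, Complex.exp_sub]
    rw [key]
    field_simp [Complex.exp_ne_zero]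
    ring_nf
    congr 1
    rw [hηdef]
    ring
  obtain ⟨j0, hj0⟩ := Complex.exp_eq_exp_iff_exists_int.1 key2
  refine ⟨j0, k, ?_, ?_⟩
  · have hδδ : deltaAB a b α β j0 k = deltaAB a b α β 0 k - 2 * (j0:ℂ) * (Real.pi:ℂ) := by
      simp only [deltaAB]; push_cast; ring
    rw [hδδ]
    linear_combination hj0
  · have hI : Complex.I * Complex.I = -1 := Complex.I_mul_I
    have hgoal : p.1 - p.2 = u - v - (((Real.log (‖(α)‖) - Real.log (‖(β)‖)) / b : ℝ) : ℂ) := by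
      rw [hu, hv]; push_cast; ring
    rw [hgoal]
    have : u - v = -Complex.I * Complex.log (rho2 a b α β p) + 2 * (Real.pi:ℂ) * (k:ℂ) := by
      linear_combination (-Complex.I) * hk + (u - v - 2*(Real.pi:ℂ)*(k:ℂ)) * hI
    rw [this]

lemma abs_sub_le' (x y : ℂ) : ‖(x - y)‖ ≤ ‖(x)‖ + ‖(y)‖ := by
  simpa [sub_eq_add_neg] using norm_add_le x (-y)

lemma abs_le_sub_add (x y : ℂ) : ‖(x)‖ ≤ ‖(x - y)‖ + ‖(y)‖ := by
  simpa using norm_add_le (x - y) y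

set_option maxHeartbeats 1000000 in
/-- there are `N, κ > 0` (independent of `ε`) such that, for all sufficiently
small `ε > 0` (smaller than some threshold `ε₁ ≤ N⁻¹e^{-N}`), the set `Z^{A,ε,λ}_{α,β,θ}` is
`κ`-dominated by `Δ_{Q'} ∪ Δ_{Λ'_{1,s}} ∪ Δ_{Λ'_{2,s}}`, where the primed sets are built from
`s' = s + log|δ_{α,β}| + N` when condition (AA) holds (with its unique witnesses `n, m`);
in particular `Z^{A,ε,λ}_{α,β,θ}` is empty when (AA) fails. -/
theorem stmt11 (a b : ℝ) (hb : 0 < b) :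
    ∃ e0 : ℝ, 0 < e0 ∧ ∃ N : ℝ, 0 < N ∧ ∃ κ : ℝ, 0 < κ ∧
      ∃ e1 : ℝ, 0 < e1 ∧ e1 ≤ N⁻¹ * Real.exp (-N) ∧
        ∀ ε : ℝ, 0 < ε → ε ≤ e1 →
          ∀ α ∈ ringA b, ∀ β ∈ ringA b, ∀ θ ∈ thetaSet e0, ∀ s : ℝ, 0 < s →
            ((¬ condAA a b N ε α β → solA a b α β θ (Real.exp s) ε = ∅) ∧
             (∀ n m : ℤ, ‖deltaAB a b α β n m‖ ≤ N * ε →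
                SetDomBySet κ (solA a b α β θ (Real.exp s) ε)
                  (diagOf (lineQ a b) ∪
                   diagOf (if 0 ≤ s + Real.log (‖deltaAB a b α β n m‖) + N then
                      lam1Line a b (s + Real.log (‖deltaAB a b α β n m‖) + N)
                    else ∅) ∪
                   diagOf (if 0 ≤ s + Real.log (‖deltaAB a b α β n m‖) + N then
                      lam2Line a b (s + Real.log (‖deltaAB a b α β n m‖) + N)
                    else ∅)))) := by
  have hπ3 : (3:ℝ) < Real.pi := Real.pi_gt_three
  have hπ4 : Real.pi < 3.15 := Real.pi_lt_d2
  obtain ⟨H, hHdef⟩ : ∃ x:ℝ, x = |a| + b := ⟨_, rfl⟩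
  have hH0 : 0 < H := by rw [hHdef]; positivity
  obtain ⟨K0, hK0def⟩ : ∃ x:ℝ, x = Real.log (8 + 8/b) + Real.log (9 + 9*H) := ⟨_, rfl⟩
  have hK0a : Real.log 8 ≤ K0 := by
    have h1 : Real.log 8 ≤ Real.log (8 + 8/b) := by
      apply Real.log_le_log (by norm_num)
      have : 0 < 8/b := by positivity
      linarith
    have h2 : (0:ℝ) ≤ Real.log (9 + 9*H) := Real.log_nonneg (by nlinarith)
    rw [hK0def]; linarith
  have hK0b : Real.log (8/b) ≤ K0 := by
    have h1 : Real.log (8/b) ≤ Real.log (8 + 8/b) := by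
      apply Real.log_le_log (by positivity); norm_num
    have h2 : (0:ℝ) ≤ Real.log (9 + 9*H) := Real.log_nonneg (by nlinarith)
    rw [hK0def]; linarith
  have hK0c : Real.log (9 + 9*H) ≤ K0 := by
    have h1 : (0:ℝ) ≤ Real.log (8 + 8/b) := Real.log_nonneg (by nlinarith [div_pos (by norm_num : (0:ℝ) < 8) hb])
    rw [hK0def]; linarith
  have hK0pos : 0 < K0 := by
    have := Real.log_pos (show (1:ℝ) < 8 + 8/b by nlinarith [div_pos (by norm_num : (0:ℝ) < 8) hb])
    have h2 : (0:ℝ) ≤ Real.log (9 + 9*H) := Real.log_nonneg (by nlinarith)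
    rw [hK0def]; linarith
  obtain ⟨M, hMdef⟩ : ∃ x:ℝ, x = Real.log (72*(1+H) + 72/b) := ⟨_, rfl⟩
  have hMexp : Real.exp (-M) * (72*(1+H) + 72/b) = 1 := by
    rw [Real.exp_neg, hMdef, Real.exp_log (by positivity)]
    field_simp
  have hM0 : 0 < M := hMdef ▸ Real.log_pos (by nlinarith [div_pos (by norm_num : (0:ℝ) < 72) hb])
  obtain ⟨N, hNdef⟩ : ∃ x:ℝ, x = 30 + 16*H + K0 + |Real.log b| := ⟨_, rfl⟩
  have hN30 : 30 + 16*H + K0 ≤ N := by rw [hNdef]; linarith [abs_nonneg (Real.log b)]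
  have hNpos : 0 < N := by nlinarith [abs_nonneg (Real.log b)]
  obtain ⟨κ, hκdef⟩ : ∃ x:ℝ, x = (N + K0 + M) * (1 + (1+|a|)/b) + 20 := ⟨_, rfl⟩
  have hκpos : 0 < κ := by
    rw [hκdef]
    have h1 : 0 < 1 + (1+|a|)/b := by positivity
    nlinarith
  refine ⟨1/2, by norm_num, N, hNpos, κ, hκpos, N⁻¹ * Real.exp (-N), by positivity, le_refl _, ?_⟩
  intro ε hε0 hε1 α hαr β hβr θ hθ s hs
  have hαne : α ≠ 0 := by
    intro h0; rw [h0] at hαr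
    exact absurd hαr.1 (by simp [Real.exp_pos]; positivity)
  have hβne : β ≠ 0 := by
    intro h0; rw [h0] at hβr
    exact absurd hβr.1 (by simp [Real.exp_pos]; positivity)
  -- smallness facts
  have hεN : N * ε ≤ Real.exp (-N) := by
    rw [inv_mul_eq_div] at hε1
    rw [mul_comm]
    exact (le_div_iff₀ hNpos).1 hε1
  have hexp30 : Real.exp (-(30:ℝ)) ≤ 1/31 := by
    rw [Real.exp_neg, show (1:ℝ)/31 = 31⁻¹ by norm_num]
    have h31 : (31:ℝ) ≤ Real.exp 30 := by linarith [Real.add_one_le_exp (30:ℝ)]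
    exact inv_anti₀ (by norm_num) h31
  have hεe30 : N * ε ≤ Real.exp (-(30:ℝ)) := by
    refine le_trans hεN (Real.exp_le_exp.2 ?_)
    rw [hNdef]; nlinarith [abs_nonneg (Real.log b)]
  have hεb : N * ε ≤ Real.exp (-(30:ℝ)) * b := by
    refine le_trans hεN ?_
    have h1 : -N ≤ -30 + Real.log b := by
      have := neg_abs_le (Real.log b)
      rw [hNdef]; nlinarith
    calc Real.exp (-N) ≤ Real.exp (-30 + Real.log b) := Real.exp_le_exp.2 h1
      _ = Real.exp (-(30:ℝ)) * b := by rw [Real.exp_add, Real.exp_log hb]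
  have hεsmall : ε ≤ 1/31 := by
    have h1 : ε ≤ N * ε := by nlinarith
    linarith [le_trans h1 hεe30]
  have hHε : H * ε ≤ 1/31 := by
    have h16 : 16 * (H * ε) ≤ N * ε := by
      have : 16*H ≤ N := by rw [hNdef]; linarith [abs_nonneg (Real.log b)]
      nlinarith
    have hHε0 : 0 ≤ H * ε := by positivity
    linarith
  have hηabs : ‖(etaC a b)‖ ≤ H := by
    rw [hHdef]

    calc ‖(etaC a b)‖ ≤ ‖(a:ℂ)‖ + ‖((b:ℂ)*Complex.I)‖ :=
          norm_add_le _ _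
      _ = |a| + b := by simp [Complex.norm_real, Real.norm_eq_abs, abs_of_pos hb]
  have hηlo : b ≤ ‖(etaC a b)‖ := by
    have := Complex.abs_im_le_norm (etaC a b)
    have him : (etaC a b).im = b := by simp [etaC]
    rw [him, abs_of_pos hb] at this
    exact this
  have hε14 : ε ≤ 1/4 := by linarith
  have hεlt1 : ε < 1 := by linarith
  constructor
  · -- Part 1
    intro hAA
    rw [Set.eq_empty_iff_forall_notMem]
    intro p hp
    apply hAA
    obtain ⟨hc1, hc2, j, k, hjk, hdiag⟩ :=
      sol_structure a b hb α β hαne hβne θ s ε hεlt1 p hp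
    obtain ⟨-, hρ1ε, hρ2ε⟩ := hp
    refine ⟨j, k, ?_⟩
    have habs : ‖(deltaAB a b α β j k)‖
        = ‖(Complex.log (rho1 a b α β p) - etaC a b * Complex.log (rho2 a b α β p))‖ := by
      rw [← hjk, norm_mul, Complex.norm_I, one_mul]
    rw [habs]
    have hL1 : ‖(Complex.log (rho1 a b α β p))‖ ≤ 6 * ε :=
      le_trans (myCLogLe (le_trans hρ1ε hε14)) (by linarith)
    have hL2 : ‖(Complex.log (rho2 a b α β p))‖ ≤ 6 * ε :=
      le_trans (myCLogLe (le_trans hρ2ε hε14)) (by linarith)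
    calc ‖(Complex.log (rho1 a b α β p) - etaC a b * Complex.log (rho2 a b α β p))‖
        ≤ ‖(Complex.log (rho1 a b α β p))‖
          + ‖(etaC a b * Complex.log (rho2 a b α β p))‖ := abs_sub_le' _ _
      _ ≤ 6*ε + H * (6*ε) := by
          rw [norm_mul]
          have := mul_le_mul hηabs hL2 (norm_nonneg _) (le_of_lt hH0)
          linarith
      _ ≤ N * ε := by nlinarith
  · -- Part 2
    intro n m hδnm p hp
    have hp' := hp
    obtain ⟨⟨hS1, hS2, -, -⟩, hρ1ε, hρ2ε⟩ := hp'
    obtain ⟨hc1, hc2, j, k, hjk, hdiag⟩ :=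
      sol_structure a b hb α β hαne hβne θ s ε hεlt1 p hp
    have hρ2ne : rho2 a b α β p ≠ 0 := by
      intro h0; rw [h0] at hρ2ε; simp at hρ2ε; linarith only [hρ2ε, hεsmall]
    have hρ1ne : rho1 a b α β p ≠ 0 := by
      intro h0; rw [h0] at hρ1ε; simp at hρ1ε; linarith only [hρ1ε, hεsmall]
    obtain ⟨L1, hL1def⟩ : ∃ z:ℂ, z = Complex.log (rho1 a b α β p) := ⟨_, rfl⟩
    obtain ⟨L2, hL2def⟩ : ∃ z:ℂ, z = Complex.log (rho2 a b α β p) := ⟨_, rfl⟩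
    rw [← hL1def, ← hL2def] at hjk
    rw [← hL2def] at hdiag
    have hL1up : ‖(L1)‖ ≤ 6 * ‖(rho1 a b α β p - 1)‖ :=
      hL1def ▸ myCLogLe (le_trans hρ1ε hε14)
    have hL2up : ‖(L2)‖ ≤ 6 * ‖(rho2 a b α β p - 1)‖ :=
      hL2def ▸ myCLogLe (le_trans hρ2ε hε14)
    have hL1ε : ‖(L1)‖ ≤ 6 * ε := le_trans hL1up (by linarith only [hρ1ε])
    have hL2ε : ‖(L2)‖ ≤ 6 * ε := le_trans hL2up (by linarith only [hρ2ε])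
    have hL1lo : ‖(rho1 a b α β p - 1)‖ ≤ 2 * ‖(L1)‖ := by
      have hexp : Complex.exp L1 = rho1 a b α β p := hL1def ▸ Complex.exp_log hρ1ne
      have := Complex.norm_exp_sub_one_le (x := L1) (by linarith only [hL1ε, hεsmall])
      rwa [hexp] at this
    have hL2lo : ‖(rho2 a b α β p - 1)‖ ≤ 2 * ‖(L2)‖ := by
      have hexp : Complex.exp L2 = rho2 a b α β p := hL2def ▸ Complex.exp_log hρ2ne
      have := Complex.norm_exp_sub_one_le (x := L2) (by linarith only [hL2ε, hεsmall])
      rwa [hexp] at this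
    have hθ1a : 1/2 ≤ ‖(θ.1)‖ ∧ ‖(θ.1)‖ ≤ 3/2 := by
      have h := hθ.1
      have habs : |‖(θ.1)‖ - 1| ≤ ‖(θ.1 - 1)‖ := by
        simpa using abs_norm_sub_norm_le θ.1 (1:ℂ)
      have h2 := abs_le.1 habs
      constructor <;> linarith only [h, h2.1, h2.2]
    have hθ2a : 1/2 ≤ ‖(θ.2)‖ ∧ ‖(θ.2)‖ ≤ 3/2 := by
      have h := hθ.2
      have habs : |‖(θ.2)‖ - 1| ≤ ‖(θ.2 - 1)‖ := by
        simpa using abs_norm_sub_norm_le θ.2 (1:ℂ)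
      have h2 := abs_le.1 habs
      constructor <;> linarith only [h, h2.1, h2.2]
    obtain ⟨X, hXdef⟩ : ∃ x:ℝ, x = p.2.im := ⟨_, rfl⟩
    obtain ⟨Y, hYdef⟩ : ∃ x:ℝ, x = b * p.2.re + a * p.2.im := ⟨_, rfl⟩
    have hX0 : 0 < X := hXdef ▸ hS2.1
    have hY0 : 0 < Y := hYdef ▸ hS2.2
    rw [← hXdef] at hc1
    rw [← hYdef] at hc2
    have hEX4 : Real.exp (X - s) ≤ 4 * ‖(L2)‖ := by
      nlinarith only [hc1, hL2lo, hθ2a.1, Real.exp_pos (X - s)]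
    have hEY4 : Real.exp (Y - s) ≤ 4 * ‖(L1)‖ := by
      nlinarith only [hc2, hL1lo, hθ1a.1, Real.exp_pos (Y - s)]
    have hL2up9 : ‖(L2)‖ ≤ 9 * Real.exp (X - s) := by
      nlinarith only [hL2up, hc1, hθ2a.2, Real.exp_pos (X - s)]
    have hL1up9 : ‖(L1)‖ ≤ 9 * Real.exp (Y - s) := by
      nlinarith only [hL1up, hc2, hθ1a.2, Real.exp_pos (Y - s)]
    have habsD : ‖(deltaAB a b α β j k)‖ = ‖(L1 - etaC a b * L2)‖ := by
      rw [← hjk, norm_mul, Complex.norm_I, one_mul]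
    have hδjk : ‖(deltaAB a b α β j k)‖ ≤ N * ε := by
      rw [habsD]
      have h66 : 6 + 6*H ≤ N := by linarith only [hN30, hK0pos, hH0]
      calc ‖(L1 - etaC a b * L2)‖
          ≤ ‖(L1)‖ + ‖(etaC a b * L2)‖ := abs_sub_le' _ _
        _ ≤ 6*ε + H * (6*ε) := by
            rw [norm_mul]
            have := mul_le_mul hηabs hL2ε (norm_nonneg _) (le_of_lt hH0)
            linarith only [this, hL1ε]
        _ ≤ N * ε := by nlinarith only [h66, hε0.le]
    have hdiffabs : ‖(deltaAB a b α β n m - deltaAB a b α β j k)‖ ≤ 2*(N*ε) :=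
      le_trans (abs_sub_le' _ _) (by linarith only [hδnm, hδjk])
    have hdiffeq : deltaAB a b α β n m - deltaAB a b α β j k
        = -2*((n:ℂ)-(j:ℂ))*(Real.pi:ℂ) + 2*((m:ℂ)-(k:ℂ))*etaC a b*(Real.pi:ℂ) := by
      simp only [deltaAB]; push_cast; ring
    have hm : m = k := by
      by_contra hne
      have him := Complex.abs_im_le_norm (deltaAB a b α β n m - deltaAB a b α β j k)
      have himval : (deltaAB a b α β n m - deltaAB a b α β j k).im
          = 2*((m:ℝ)-(k:ℝ))*b*Real.pi := by
        rw [hdiffeq]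
        simp [etaC, Complex.add_im, Complex.mul_im, Complex.mul_re]
        try push_cast
        try ring
      rw [himval] at him
      have h1 : (1:ℝ) ≤ |(m:ℝ)-(k:ℝ)| := by
        have hz : (1:ℤ) ≤ |m - k| := Int.one_le_abs (sub_ne_zero.2 hne)
        have h6 : ((1:ℤ):ℝ) ≤ ((|m - k|:ℤ):ℝ) := by exact_mod_cast hz
        rwa [Int.cast_abs, Int.cast_sub, Int.cast_one] at h6
      have h2 : 2*b*Real.pi ≤ |2*((m:ℝ)-(k:ℝ))*b*Real.pi| := by
        rw [abs_mul, abs_mul, abs_mul]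
        rw [abs_of_nonneg (by norm_num : (0:ℝ) ≤ 2), abs_of_pos hb,
          abs_of_pos (by linarith only [hπ3] : (0:ℝ) < Real.pi)]
        nlinarith only [h1, hb, hπ3, mul_pos hb (show (0:ℝ) < Real.pi by linarith only [hπ3])]
      nlinarith only [him, hdiffabs, hεb, hexp30, h2, hb, hπ3]
    have hn : n = j := by
      by_contra hne
      have heqr : deltaAB a b α β n m - deltaAB a b α β j k
          = (((-2*((n:ℝ)-(j:ℝ))*Real.pi : ℝ)) : ℂ) := by
        rw [hdiffeq, hm]; push_cast; ring
      have habs2 := congrArg norm heqr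
      rw [Complex.norm_real, Real.norm_eq_abs] at habs2
      have h1 : (1:ℝ) ≤ |(n:ℝ)-(j:ℝ)| := by
        have hz : (1:ℤ) ≤ |n - j| := Int.one_le_abs (sub_ne_zero.2 hne)
        have h6 : ((1:ℤ):ℝ) ≤ ((|n - j|:ℤ):ℝ) := by exact_mod_cast hz
        rwa [Int.cast_abs, Int.cast_sub, Int.cast_one] at h6
      have h2 : 2*Real.pi ≤ |(-2*((n:ℝ)-(j:ℝ))*Real.pi)| := by
        rw [abs_mul, abs_mul]
        rw [abs_of_nonpos (by norm_num : (-2:ℝ) ≤ 0),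
          abs_of_pos (by linarith only [hπ3] : (0:ℝ) < Real.pi)]
        nlinarith only [h1, hπ3]
      nlinarith only [h2, habs2, hdiffabs, hεe30, hexp30, hπ3]
    have habsD' : ‖(deltaAB a b α β n m)‖ = ‖(L1 - etaC a b * L2)‖ := by
      rw [hm, hn]; exact habsD
    rw [← hm] at hdiag
    have hkabs : |(m:ℝ)| ≤ 1 := by
      have him := Complex.abs_im_le_norm (deltaAB a b α β n m)
      have himval : (deltaAB a b α β n m).im
          = -(Real.log (‖(α)‖) - Real.log (‖(β)‖)) + 2*(m:ℝ)*b*Real.pi := by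
        simp [deltaAB, etaC, Complex.add_im, Complex.mul_im, Complex.mul_re]
        try push_cast
        try ring
      rw [himval] at him
      have hlogα1 : Real.log (‖(α)‖) ≤ 0 := Real.log_nonpos (norm_nonneg α) hαr.2
      have hlogα2 : -(2*Real.pi*b) < Real.log (‖(α)‖) := by
        have := Real.log_lt_log (Real.exp_pos _) hαr.1
        rwa [Real.log_exp] at this
      have hlogβ1 : Real.log (‖(β)‖) ≤ 0 := Real.log_nonpos (norm_nonneg β) hβr.2
      have hlogβ2 : -(2*Real.pi*b) < Real.log (‖(β)‖) := by
        have := Real.log_lt_log (Real.exp_pos _) hβr.1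
        rwa [Real.log_exp] at this
      have habs3 : |2*(m:ℝ)*b*Real.pi| ≤
          |(-(Real.log (‖(α)‖) - Real.log (‖(β)‖)) + 2*(m:ℝ)*b*Real.pi)|
          + |Real.log (‖(α)‖) - Real.log (‖(β)‖)| := by
        have h4 := abs_add_le (-(Real.log (‖(α)‖) - Real.log (‖(β)‖))
          + 2*(m:ℝ)*b*Real.pi) (Real.log (‖(α)‖) - Real.log (‖(β)‖))
        have he : (-(Real.log (‖(α)‖) - Real.log (‖(β)‖))
            + 2*(m:ℝ)*b*Real.pi) + (Real.log (‖(α)‖) - Real.log (‖(β)‖))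
            = 2*(m:ℝ)*b*Real.pi := by ring
        rwa [he] at h4
      have hlogd : |Real.log (‖(α)‖) - Real.log (‖(β)‖)| ≤ 2*Real.pi*b := by
        rw [abs_le]
        constructor <;> nlinarith only [hlogα1, hlogα2, hlogβ1, hlogβ2]
      have htr : |2*(m:ℝ)*b*Real.pi| ≤ N*ε + 2*Real.pi*b :=
        le_trans habs3 (by linarith only [le_trans him hδnm, hlogd])
      have hm2 : |(m:ℝ)| < 2 := by
        rw [abs_mul, abs_mul, abs_mul, abs_of_nonneg (by norm_num : (0:ℝ) ≤ 2), abs_of_pos hb,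
          abs_of_pos (by linarith only [hπ3] : (0:ℝ) < Real.pi)] at htr
        nlinarith only [htr, hεb, hexp30, hb, hπ3, abs_nonneg (m:ℝ),
          mul_pos hb Real.pi_pos]
      have hm3 : |m| < 2 := by
        have h5 := hm2
        rw [show |(m:ℝ)| = ((|m| : ℤ) : ℝ) by rw [Int.cast_abs]] at h5
        exact_mod_cast h5
      have hm4 : |m| ≤ 1 := by omega
      calc |(m:ℝ)| = ((|m| : ℤ) : ℝ) := by rw [Int.cast_abs]
        _ ≤ 1 := by exact_mod_cast hm4
    have hdist14 : dist p.1 p.2 ≤ 14 := by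
      rw [Complex.dist_eq, hdiag]
      have t1 : ‖(-Complex.I * L2 + 2 * (Real.pi:ℂ) * (m:ℂ)
          - (((Real.log (‖(α)‖) - Real.log (‖(β)‖)) / b : ℝ) : ℂ))‖
          ≤ ‖(-Complex.I * L2)‖ + ‖(2 * (Real.pi:ℂ) * (m:ℂ))‖
            + ‖((((Real.log (‖(α)‖) - Real.log (‖(β)‖)) / b : ℝ) : ℂ))‖ := by
        refine le_trans (abs_sub_le' _ _) ?_
        have := norm_add_le (-Complex.I * L2) (2 * (Real.pi:ℂ) * (m:ℂ))
        linarith only [this]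
      have t2 : ‖(-Complex.I * L2)‖ ≤ 1 := by
        rw [norm_mul]
        simp only [norm_neg, Complex.norm_I, one_mul]
        linarith only [hL2ε, hεsmall, hε0]
      have t3 : ‖(2 * (Real.pi:ℂ) * (m:ℂ))‖ ≤ 2*Real.pi := by
        have he : (2 * (Real.pi:ℂ) * (m:ℂ)) = (((2*Real.pi*(m:ℝ) : ℝ)) : ℂ) := by push_cast; ring
        rw [he, Complex.norm_real, Real.norm_eq_abs, abs_mul, abs_mul,
          abs_of_nonneg (by norm_num : (0:ℝ) ≤ 2),
          abs_of_pos (by linarith only [hπ3] : (0:ℝ) < Real.pi)]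
        nlinarith only [hkabs, hπ3]
      have t4 : ‖((((Real.log (‖(α)‖) - Real.log (‖(β)‖)) / b : ℝ) : ℂ))‖
          ≤ 2*Real.pi := by
        rw [Complex.norm_real, Real.norm_eq_abs, abs_div, abs_of_pos hb, div_le_iff₀ hb]
        have hlogα1 : Real.log (‖(α)‖) ≤ 0 := Real.log_nonpos (norm_nonneg α) hαr.2
        have hlogα2 : -(2*Real.pi*b) < Real.log (‖(α)‖) := by
          have := Real.log_lt_log (Real.exp_pos _) hαr.1
          rwa [Real.log_exp] at this
        have hlogβ1 : Real.log (‖(β)‖) ≤ 0 := Real.log_nonpos (norm_nonneg β) hβr.2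
        have hlogβ2 : -(2*Real.pi*b) < Real.log (‖(β)‖) := by
          have := Real.log_lt_log (Real.exp_pos _) hβr.1
          rwa [Real.log_exp] at this
        rw [abs_le]
        constructor <;> nlinarith only [hlogα1, hlogα2, hlogβ1, hlogβ2]
      calc ‖(-Complex.I * L2 + 2 * (Real.pi:ℂ) * (m:ℂ)
          - (((Real.log (‖(α)‖) - Real.log (‖(β)‖)) / b : ℝ) : ℂ))‖
          ≤ 1 + 2*Real.pi + 2*Real.pi := by linarith only [t1, t2, t3, t4]
        _ ≤ 14 := by linarith only [hπ4]
    rw [habsD']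
    obtain ⟨s', hs'def⟩ : ∃ x:ℝ, x = s + Real.log (‖(L1 - etaC a b * L2)‖) + N :=
      ⟨_, rfl⟩
    rw [← hs'def]
    have hNK0 : K0 ≤ N := by linarith only [hN30, hH0]
    have hS0 : 0 < N + K0 + M := by linarith only [hNpos, hK0pos, hM0]
    have hκeq : κ = (N+K0+M) + (N+K0+M)/b + |a| * (N+K0+M)/b + 20 := by
      rw [hκdef]; field_simp; ring
    have hT1 : 0 ≤ |a| * (N+K0+M)/b := by positivity
    have hT2 : 0 ≤ (N+K0+M)/b := by positivity
    have hηconj_im : (starRingEnd ℂ (etaC a b)).im = -b := by simp [etaC]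
    have hηconj_re : (starRingEnd ℂ (etaC a b)).re = a := by simp [etaC]
    rcases le_or_gt (X + M) Y with hA | hA'
    · -- Case A : near Λ₂
      have hEXM : Real.exp (X - s) ≤ Real.exp (-M) * Real.exp (Y - s) := by
        rw [← Real.exp_add]; exact Real.exp_le_exp.2 (by linarith only [hA])
      have hMe : 0 < Real.exp (-M) := Real.exp_pos _
      have h9HM : 9 * H * Real.exp (-M) ≤ 1/8 := by
        have h1 : 0 ≤ Real.exp (-M) * (72/b) := by positivity
        linarith only [hMexp, h1, hMe.le]
      have hDlo : Real.exp (Y - s)/8 ≤ ‖(L1 - etaC a b * L2)‖ := by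
        have t1 : ‖(L1)‖ ≤ ‖(L1 - etaC a b*L2)‖
            + ‖(etaC a b * L2)‖ := abs_le_sub_add _ _
        have t2 : ‖(etaC a b * L2)‖ ≤ H * (9*Real.exp (X-s)) := by
          rw [norm_mul]
          exact mul_le_mul hηabs hL2up9 (norm_nonneg _) hH0.le
        have t3 : 9*H*Real.exp (X-s) ≤ 9*H*(Real.exp (-M)*Real.exp (Y-s)) := by
          have := mul_le_mul_of_nonneg_left hEXM (by positivity : (0:ℝ) ≤ 9*H)
          linarith only [this]
        have t4 : 9*H*(Real.exp (-M)*Real.exp (Y-s)) ≤ (1/8)*Real.exp (Y-s) := by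
          nlinarith only [Real.exp_pos (Y-s), h9HM]
        linarith only [t1, t2, t3, t4, hEY4]
      have hDup : ‖(L1 - etaC a b * L2)‖ ≤ (9 + 9*H) * Real.exp (Y - s) := by
        have t1 := abs_sub_le' L1 (etaC a b * L2)
        have t2 : ‖(etaC a b * L2)‖ ≤ H * (9*Real.exp (X-s)) := by
          rw [norm_mul]
          exact mul_le_mul hηabs hL2up9 (norm_nonneg _) hH0.le
        have t5 : Real.exp (X - s) ≤ Real.exp (Y - s) := Real.exp_le_exp.2 (by linarith only [hA, hM0])
        nlinarith only [t1, t2, t5, hL1up9, hH0.le]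
      have hDpos : 0 < ‖(L1 - etaC a b * L2)‖ :=
        lt_of_lt_of_le (by positivity) hDlo
      have hlog1 : Y - s - Real.log 8 ≤ Real.log (‖(L1 - etaC a b * L2)‖) := by
        have h := Real.log_le_log (by positivity) hDlo
        rwa [Real.log_div (ne_of_gt (Real.exp_pos _)) (by norm_num), Real.log_exp] at h
      have hlog2 : Real.log (‖(L1 - etaC a b * L2)‖) ≤ Y - s + Real.log (9 + 9*H) := by
        have h := Real.log_le_log hDpos hDup
        rwa [Real.log_mul (by positivity) (ne_of_gt (Real.exp_pos _)), Real.log_exp,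
          add_comm (Real.log (9+9*H))] at h
      have hs'0 : 0 ≤ s' := by
        rw [hs'def]
        have h8 : Real.log 8 ≤ K0 := hK0a
        linarith only [hlog1, hY0, h8, hNK0]
      have hYs' : |Y - s'| ≤ N + K0 := by
        rw [abs_le, hs'def]
        constructor
        · linarith only [hlog2, hK0c, hNpos]
        · linarith only [hlog1, hK0a, hNpos]
      refine ⟨(((s'/b : ℝ) : ℂ) - (starRingEnd ℂ (etaC a b)) * ((X/b : ℝ) : ℂ),
        ((s'/b : ℝ) : ℂ) - (starRingEnd ℂ (etaC a b)) * ((X/b : ℝ) : ℂ)), ?_, ?_⟩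
      · refine Set.mem_union_right _ ?_
        rw [if_pos hs'0]
        exact ⟨rfl, X/b, le_of_lt (div_pos hX0 hb), rfl⟩
      · have heq : p.2 - (((s'/b : ℝ) : ℂ) - (starRingEnd ℂ (etaC a b)) * ((X/b : ℝ) : ℂ))
            = (((Y - s')/b : ℝ) : ℂ) := by
          apply Complex.ext
          · simp only [Complex.sub_re, Complex.mul_re, Complex.ofReal_re, Complex.ofReal_im,
              hηconj_re, hηconj_im, Complex.ofReal_re]
            rw [hYdef, hXdef]
            field_simp
            ring
          · simp only [Complex.sub_im, Complex.mul_im, Complex.ofReal_re, Complex.ofReal_im,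
              hηconj_re, hηconj_im]
            rw [hXdef]
            field_simp
            ring
        have hd2 : dist p.2 (((s'/b : ℝ) : ℂ) - (starRingEnd ℂ (etaC a b)) * ((X/b : ℝ) : ℂ))
            ≤ (N + K0)/b := by
          rw [Complex.dist_eq, heq, Complex.norm_real, Real.norm_eq_abs, abs_div, abs_of_pos hb]
          exact div_le_div_of_nonneg_right hYs' hb.le
        have hAκ : (N + K0)/b + 14 ≤ κ := by
          have hd : (N+K0)/b ≤ (N+K0+M)/b := div_le_div_of_nonneg_right (by linarith only [hM0]) hb.le
          linarith only [hd, hκeq.ge, hT1, hS0.le, hκeq.le]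
        rw [Prod.dist_eq]
        apply max_le
        · calc dist p.1 _ ≤ dist p.1 p.2 + dist p.2 _ := dist_triangle _ _ _
            _ ≤ 14 + (N+K0)/b := by linarith only [hdist14, hd2]
            _ ≤ κ := by linarith only [hAκ]
        · linarith only [hd2, hAκ]
    rcases le_or_gt (Y + M) X with hB | hC
    · -- Case B : near Λ₁
      have hEYM : Real.exp (Y - s) ≤ Real.exp (-M) * Real.exp (X - s) := by
        rw [← Real.exp_add]; exact Real.exp_le_exp.2 (by linarith only [hB])
      have hMe : 0 < Real.exp (-M) := Real.exp_pos _
      have h9M : 9 * Real.exp (-M) ≤ b/8 := by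
        have h72b : (72:ℝ)/b ≤ Real.exp M := by
          rw [hMdef, Real.exp_log (by positivity)]
          nlinarith only [hH0.le, hb]
        have h72b' : (72:ℝ) ≤ Real.exp M * b := (div_le_iff₀ hb).1 h72b
        rw [Real.exp_neg]
        rw [show (9:ℝ) * (Real.exp M)⁻¹ = 9/(Real.exp M) by ring,
          div_le_div_iff₀ (Real.exp_pos M) (by norm_num : (0:ℝ) < 8)]
        linarith only [h72b']
      have hDlo : Real.exp (X - s)*(b/8) ≤ ‖(L1 - etaC a b * L2)‖ := by
        have t0 : ‖(etaC a b * L2)‖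
            = ‖((L1 - etaC a b * L2) - L1)‖ := by
          rw [show (L1 - etaC a b*L2) - L1 = -(etaC a b*L2) by ring, norm_neg]
        have t1 : ‖(etaC a b * L2)‖ ≤ ‖(L1 - etaC a b*L2)‖
            + ‖(L1)‖ := by
          rw [t0]; exact abs_sub_le' _ _
        have t2 : b * ‖(L2)‖ ≤ ‖(etaC a b * L2)‖ := by
          rw [norm_mul]
          exact mul_le_mul_of_nonneg_right hηlo (norm_nonneg _)
        have t3 : b * Real.exp (X - s) ≤ 4 * (b * ‖(L2)‖) := by
          nlinarith only [hEX4, hb]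
        have t4 : ‖(L1)‖ ≤ 9*(Real.exp (-M)*Real.exp (X-s)) := by
          nlinarith only [hL1up9, hEYM]
        have t5 : 9*(Real.exp (-M)*Real.exp (X-s)) ≤ (b/8)*Real.exp (X-s) := by
          nlinarith only [Real.exp_pos (X-s), h9M]
        nlinarith only [t1, t2, t3, t4, t5]
      have hDup : ‖(L1 - etaC a b * L2)‖ ≤ (9 + 9*H) * Real.exp (X - s) := by
        have t1 := abs_sub_le' L1 (etaC a b * L2)
        have t2 : ‖(etaC a b * L2)‖ ≤ H * (9*Real.exp (X-s)) := by
          rw [norm_mul]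
          exact mul_le_mul hηabs hL2up9 (norm_nonneg _) hH0.le
        have t5 : Real.exp (Y - s) ≤ Real.exp (X - s) := Real.exp_le_exp.2 (by linarith only [hB, hM0])
        nlinarith only [t1, t2, t5, hL1up9]
      have hDpos : 0 < ‖(L1 - etaC a b * L2)‖ :=
        lt_of_lt_of_le (by positivity) hDlo
      have hlog1 : X - s + Real.log b - Real.log 8 ≤ Real.log (‖(L1 - etaC a b * L2)‖) := by
        have h := Real.log_le_log (by positivity) hDlo
        rw [Real.log_mul (ne_of_gt (Real.exp_pos _)) (by positivity), Real.log_exp,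
          Real.log_div (ne_of_gt hb) (by norm_num)] at h
        linarith only [h]
      have hlog2 : Real.log (‖(L1 - etaC a b * L2)‖) ≤ X - s + Real.log (9 + 9*H) := by
        have h := Real.log_le_log hDpos hDup
        rwa [Real.log_mul (by positivity) (ne_of_gt (Real.exp_pos _)), Real.log_exp,
          add_comm (Real.log (9+9*H))] at h
      have hK0b' : Real.log 8 - Real.log b ≤ K0 := by
        have : Real.log (8/b) = Real.log 8 - Real.log b := Real.log_div (by norm_num) (ne_of_gt hb)
        linarith only [hK0b, this.ge, this.le]
      have hs'0 : 0 ≤ s' := by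
        rw [hs'def]
        linarith only [hlog1, hX0, hK0b', hNK0]
      have hXs' : |X - s'| ≤ N + K0 := by
        rw [abs_le, hs'def]
        constructor
        · linarith only [hlog2, hK0c, hNpos]
        · linarith only [hlog1, hK0b', hNpos]
      refine ⟨(-(starRingEnd ℂ (etaC a b)) * ((s'/b : ℝ) : ℂ) + ((Y/b : ℝ) : ℂ),
        -(starRingEnd ℂ (etaC a b)) * ((s'/b : ℝ) : ℂ) + ((Y/b : ℝ) : ℂ)), ?_, ?_⟩
      · refine Set.mem_union_left _ (Set.mem_union_right _ ?_)
        rw [if_pos hs'0]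
        exact ⟨rfl, Y/b, le_of_lt (div_pos hY0 hb), rfl⟩
      · have heq : p.2 - (-(starRingEnd ℂ (etaC a b)) * ((s'/b : ℝ) : ℂ) + ((Y/b : ℝ) : ℂ))
            = ((((-a)*(X - s'))/b : ℝ) : ℂ) + ((X - s' : ℝ) : ℂ)*Complex.I := by
          apply Complex.ext
          · simp only [Complex.add_re, Complex.sub_re, Complex.mul_re, Complex.neg_re,
              Complex.ofReal_re, Complex.ofReal_im, hηconj_re, hηconj_im, Complex.neg_im,
              Complex.I_re, Complex.I_im]
            rw [hYdef, hXdef]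
            field_simp
            ring
          · simp only [Complex.add_im, Complex.sub_im, Complex.mul_im, Complex.neg_re,
              Complex.ofReal_re, Complex.ofReal_im, hηconj_re, hηconj_im, Complex.neg_im,
              Complex.I_re, Complex.I_im]
            rw [hXdef]
            field_simp
            ring
        have hd2 : dist p.2 (-(starRingEnd ℂ (etaC a b)) * ((s'/b : ℝ) : ℂ) + ((Y/b : ℝ) : ℂ))
            ≤ |a| * (N + K0)/b + (N + K0) := by
          rw [Complex.dist_eq, heq]
          refine le_trans (Complex.norm_le_abs_re_add_abs_im _) ?_
          have hre : ((((-a)*(X - s'))/b : ℝ) : ℂ).re + (((X - s' : ℝ) : ℂ)*Complex.I).re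
              = ((-a)*(X - s'))/b := by
            simp [Complex.mul_re]
          have him : ((((-a)*(X - s'))/b : ℝ) : ℂ).im + (((X - s' : ℝ) : ℂ)*Complex.I).im
              = X - s' := by
            simp [Complex.mul_im]
          rw [Complex.add_re, Complex.add_im, hre, him]
          have h1 : |(-a) * (X - s')/b| ≤ |a| * (N+K0)/b := by
            rw [abs_div, abs_of_pos hb, abs_mul, abs_neg]
            apply div_le_div_of_nonneg_right ?_ hb.le
            exact mul_le_mul_of_nonneg_left hXs' (abs_nonneg a)
          linarith only [h1, hXs']
        have hBκ : |a| * (N + K0)/b + (N + K0) + 14 ≤ κ := by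
          have hd : |a| * (N+K0)/b ≤ |a| * (N+K0+M)/b := by
            apply div_le_div_of_nonneg_right ?_ hb.le
            exact mul_le_mul_of_nonneg_left (by linarith only [hM0]) (abs_nonneg a)
          linarith only [hd, hκeq.ge, hT2, hM0]
        rw [Prod.dist_eq]
        apply max_le
        · calc dist p.1 _ ≤ dist p.1 p.2 + dist p.2 _ := dist_triangle _ _ _
            _ ≤ 14 + (|a| * (N+K0)/b + (N+K0)) := by linarith only [hdist14, hd2]
            _ ≤ κ := by linarith only [hBκ]
        · linarith only [hd2, hBκ]
    · -- Case C : near Q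
      refine ⟨(((X/b : ℝ) : ℂ) * (1 - starRingEnd ℂ (etaC a b)),
        ((X/b : ℝ) : ℂ) * (1 - starRingEnd ℂ (etaC a b))), ?_, ?_⟩
      · exact Set.mem_union_left _ (Set.mem_union_left _
          ⟨rfl, X/b, le_of_lt (div_pos hX0 hb), rfl⟩)
      · have heq : p.2 - ((X/b : ℝ) : ℂ) * (1 - starRingEnd ℂ (etaC a b))
            = (((Y - X)/b : ℝ) : ℂ) := by
          apply Complex.ext
          · simp only [Complex.sub_re, Complex.mul_re, Complex.ofReal_re, Complex.ofReal_im,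
              Complex.sub_im, Complex.one_re, Complex.one_im, hηconj_re, hηconj_im]
            rw [hYdef, hXdef]
            field_simp
            ring
          · simp only [Complex.sub_im, Complex.mul_im, Complex.ofReal_re, Complex.ofReal_im,
              Complex.sub_re, Complex.one_re, Complex.one_im, hηconj_re, hηconj_im]
            rw [hXdef]
            field_simp
            ring
        have hd2 : dist p.2 (((X/b : ℝ) : ℂ) * (1 - starRingEnd ℂ (etaC a b))) ≤ M/b := by
          rw [Complex.dist_eq, heq, Complex.norm_real, Real.norm_eq_abs, abs_div, abs_of_pos hb]
          apply div_le_div_of_nonneg_right ?_ hb.le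
          rw [abs_le]
          constructor <;> linarith only [hA', hC]
        have hCκ : M/b + 14 ≤ κ := by
          have hd : M/b ≤ (N+K0+M)/b := div_le_div_of_nonneg_right (by linarith only [hNpos, hK0pos]) hb.le
          linarith only [hd, hκeq.ge, hT1, hS0.le]
        rw [Prod.dist_eq]
        apply max_le
        · calc dist p.1 _ ≤ dist p.1 p.2 + dist p.2 _ := dist_triangle _ _ _
            _ ≤ 14 + M/b := by linarith only [hdist14, hd2]
            _ ≤ κ := by linarith only [hCκ]
        · linarith only [hd2, hCκ]
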